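/- Let A be an abelian category, n ≥ 0, and f : I_n → A a functor. Then there are isomorphisms c̄r(f∘z) ≅ cr(f) ≅ c̄r′(f∘z′) in A. In particular, coker(⊕_{S⊊n̲} f(S) : ⊕_{S⊊n̲} f(•) → f(•)) is isomorphic to ker(⊕_{S⊊n̲} f(S) : f(•) → ⊕_{S⊊n̲} f(•)). -/

import Mathlib

open CategoryTheory CategoryTheory.Limits

universe v u

variable {A : Type u} [Category.{v} A] [Abelian A]

attribute [local instance] CategoryTheory.Abelian.hasFiniteBiproducts

section Aux

/-- Two maps with the same "image" have isomorphic cokernels. -/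
noncomputable def cokernelIsoOfKills {Y Z X : A} (g : Y ⟶ X) (h : Z ⟶ X)
    (h1 : g ≫ cokernel.π h = 0) (h2 : h ≫ cokernel.π g = 0) :
    cokernel g ≅ cokernel h where
  hom := cokernel.desc g (cokernel.π h) h1
  inv := cokernel.desc h (cokernel.π g) h2
  hom_inv_id := by
    apply coequalizer.hom_ext
    simp
  inv_hom_id := by
    apply coequalizer.hom_ext
    simp

/-- Two maps with the same "kernel" have isomorphic kernels. -/
noncomputable def kernelIsoOfKills {Y Z X : A} (g : X ⟶ Y) (h : X ⟶ Z)
    (h1 : kernel.ι g ≫ h = 0) (h2 : kernel.ι h ≫ g = 0) :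
    kernel g ≅ kernel h where
  hom := kernel.lift h (kernel.ι g) h1
  inv := kernel.lift g (kernel.ι h) h2
  hom_inv_id := by
    apply equalizer.hom_ext
    simp
  inv_hom_id := by
    apply equalizer.hom_ext
    simp

/-- For an idempotent `e`, `im e ≅ coker (1 - e)`. -/
noncomputable def imageIsoCokernelOfIdem {X : A} (e : X ⟶ X) (he : e ≫ e = e) :
    Limits.image e ≅ cokernel (𝟙 X - e) := by
  have h0 : (𝟙 X - e) ≫ e = 0 := by simp [Preadditive.sub_comp, he]
  set d : cokernel (𝟙 X - e) ⟶ X := cokernel.desc (𝟙 X - e) e h0 with hd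
  have hπd : cokernel.π (𝟙 X - e) ≫ d = e := by simp [hd]
  have hπ : e ≫ cokernel.π (𝟙 X - e) = cokernel.π (𝟙 X - e) := by
    have := cokernel.condition (𝟙 X - e)
    rw [Preadditive.sub_comp, Category.id_comp, sub_eq_zero] at this
    exact this.symm
  have hdπ : d ≫ cokernel.π (𝟙 X - e) = 𝟙 _ := by
    have : cokernel.π (𝟙 X - e) ≫ d ≫ cokernel.π (𝟙 X - e)
        = cokernel.π (𝟙 X - e) ≫ 𝟙 _ := by
      rw [← Category.assoc, hπd, hπ, Category.comp_id]
    exact (cancel_epi (cokernel.π (𝟙 X - e))).mp this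
  have : Mono d := ⟨fun u v huv => by
    have := congrArg (fun t => t ≫ cokernel.π (𝟙 X - e)) huv
    simpa [Category.assoc, hdπ] using this⟩
  exact (image.isoStrongEpiMono (cokernel.π (𝟙 X - e)) d hπd).symm

/-- For an idempotent `e`, `im e ≅ ker (1 - e)`. -/
noncomputable def imageIsoKernelOfIdem {X : A} (e : X ⟶ X) (he : e ≫ e = e) :
    Limits.image e ≅ kernel (𝟙 X - e) := by
  have h0 : e ≫ (𝟙 X - e) = 0 := by simp [Preadditive.comp_sub, he]
  set k : X ⟶ kernel (𝟙 X - e) := kernel.lift (𝟙 X - e) e h0 with hk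
  have hkι : k ≫ kernel.ι (𝟙 X - e) = e := by simp [hk]
  have hι : kernel.ι (𝟙 X - e) ≫ e = kernel.ι (𝟙 X - e) := by
    have := kernel.condition (𝟙 X - e)
    rw [Preadditive.comp_sub, Category.comp_id, sub_eq_zero] at this
    exact this.symm
  have hιk : kernel.ι (𝟙 X - e) ≫ k = 𝟙 _ := by
    have : (kernel.ι (𝟙 X - e) ≫ k) ≫ kernel.ι (𝟙 X - e)
        = 𝟙 _ ≫ kernel.ι (𝟙 X - e) := by
      rw [Category.assoc, hkι, hι, Category.id_comp]
    exact (cancel_mono (kernel.ι (𝟙 X - e))).mp this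
  have hepi : Epi k := ⟨fun u v huv => by
    have := congrArg (fun t => kernel.ι (𝟙 X - e) ≫ t) huv
    simpa [← Category.assoc, hιk] using this⟩
  have : StrongEpi k := strongEpi_of_epi k
  exact (image.isoStrongEpiMono k (kernel.ι (𝟙 X - e)) hkι).symm

end Aux

theorem crbar_iso_cr_iso_crbar' (n : ℕ) (X : A) (f : Finset (Fin n) → (X ⟶ X))
    (hcomp : ∀ S T : Finset (Fin n), f S ≫ f T = f (S ∩ T))
    (hid : f Finset.univ = 𝟙 X) :
    Nonempty
      (cokernel (biproduct.desc
          (f := fun _ : {S : Finset (Fin n) // S ≠ Finset.univ} => X) (fun S => f S.1))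
        ≅ Limits.image (∑ S : Finset (Fin n), ((-1 : ℤ) ^ S.card) • f (Finset.univ \ S)))
    ∧ Nonempty
      (Limits.image (∑ S : Finset (Fin n), ((-1 : ℤ) ^ S.card) • f (Finset.univ \ S))
        ≅ kernel (biproduct.lift
            (f := fun _ : {S : Finset (Fin n) // S ≠ Finset.univ} => X) (fun S => f S.1)))
    ∧ Nonempty
      (cokernel (biproduct.desc
          (f := fun _ : {S : Finset (Fin n) // S ≠ Finset.univ} => X) (fun S => f S.1))
        ≅ kernel (biproduct.lift
            (f := fun _ : {S : Finset (Fin n) // S ≠ Finset.univ} => X) (fun S => f S.1))) := by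
  classical
  have hsdne : ∀ T : Finset (Fin n), T ≠ ∅ → Finset.univ \ T ≠ Finset.univ := by
    intro T hT h
    obtain ⟨a, ha⟩ := Finset.nonempty_iff_ne_empty.2 hT
    have : a ∈ Finset.univ \ T := by rw [h]; exact Finset.mem_univ a
    simp [Finset.mem_sdiff, ha] at this
  set e : X ⟶ X := ∑ S : Finset (Fin n), ((-1 : ℤ) ^ S.card) • f (Finset.univ \ S) with he_def
  -- key vanishing: for S ≠ univ, f S ≫ e = 0
  have hkill : ∀ S : Finset (Fin n), S ≠ Finset.univ → f S ≫ e = 0 := by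
    intro S hS
    obtain ⟨x, hx⟩ : ∃ x, x ∉ S := by
      by_contra h
      push_neg at h
      exact hS (Finset.eq_univ_iff_forall.2 h)
    rw [he_def, Preadditive.comp_sum]
    simp only [Preadditive.comp_zsmul, hcomp]
    have hrw : ∀ T : Finset (Fin n), S ∩ (Finset.univ \ T) = S \ T := by
      intro T; ext a; simp
    simp only [hrw]
    refine Finset.sum_ninvolution
      (fun T => if x ∈ T then T.erase x else insert x T) ?_ ?_ ?_ ?_
    · intro T
      by_cases hxT : x ∈ T
      · have hcard : T.card = (T.erase x).card + 1 := (Finset.card_erase_add_one hxT).symm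
        have hsd : S \ T.erase x = S \ T := by
          ext a; by_cases hax : a = x <;> simp [Finset.mem_sdiff, Finset.mem_erase, hax, hx]
        rw [if_pos hxT, hsd, hcard, pow_succ, mul_neg_one, ← add_smul, neg_add_cancel,
          zero_smul]
      · have hcard : (insert x T).card = T.card + 1 := Finset.card_insert_of_notMem hxT
        have hsd : S \ insert x T = S \ T := by
          ext a; by_cases hax : a = x <;> simp [Finset.mem_sdiff, Finset.mem_insert, hax, hx]
        rw [if_neg hxT, hsd, hcard, pow_succ, mul_neg_one, ← add_smul, add_neg_cancel,
          zero_smul]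
    · intro T _
      by_cases hxT : x ∈ T
      · rw [if_pos hxT]
        intro h
        exact Finset.notMem_erase x T (h.symm ▸ hxT)
      · rw [if_neg hxT]
        intro h
        have := Finset.mem_insert_self x T
        rw [h] at this
        exact hxT this
    · intro T; exact Finset.mem_univ _
    · intro T
      by_cases hxT : x ∈ T
      · simp [hxT, Finset.notMem_erase, Finset.insert_erase hxT]
      · simp [hxT, Finset.mem_insert_self, Finset.erase_insert hxT]
  -- e commutes with all f S
  have hcomm : ∀ S : Finset (Fin n), e ≫ f S = f S ≫ e := by
    intro S
    rw [he_def, Preadditive.comp_sum, Preadditive.sum_comp]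
    refine Finset.sum_congr rfl fun T _ => ?_
    rw [Preadditive.zsmul_comp, Preadditive.comp_zsmul, hcomp, hcomp, Finset.inter_comm]
  have hkill' : ∀ S : Finset (Fin n), S ≠ Finset.univ → e ≫ f S = 0 := fun S hS => by
    rw [hcomm S, hkill S hS]
  -- e is idempotent
  have hidem : e ≫ e = e := by
    conv_lhs => rw [he_def, Preadditive.sum_comp]
    rw [Finset.sum_eq_single (∅ : Finset (Fin n))]
    · simp [hid, he_def]
    · intro T _ hT
      have hTu : Finset.univ \ T ≠ Finset.univ := hsdne T hT
      rw [Preadditive.zsmul_comp, hkill _ hTu, smul_zero]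
    · intro h; exact absurd (Finset.mem_univ _) h
  -- abbreviations
  set D := biproduct.desc (f := fun _ : {S : Finset (Fin n) // S ≠ Finset.univ} => X)
    (fun S => f S.1) with hD
  set L := biproduct.lift (f := fun _ : {S : Finset (Fin n) // S ≠ Finset.univ} => X)
    (fun S => f S.1) with hL
  -- f S ≫ cokernel.π D = 0 for S ≠ univ
  have hfπ : ∀ S : {S : Finset (Fin n) // S ≠ Finset.univ},
      f S.1 ≫ cokernel.π D = 0 := by
    intro S
    have : f S.1 = biproduct.ι (fun _ : {S : Finset (Fin n) // S ≠ Finset.univ} => X) S ≫ D := by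
      simp [hD]
    rw [this, Category.assoc, cokernel.condition, comp_zero]
  -- (1 - e) ≫ π_D = 0
  have h1 : (𝟙 X - e) ≫ cokernel.π D = 0 := by
    rw [Preadditive.sub_comp, Category.id_comp, he_def, Preadditive.sum_comp, sub_eq_zero]
    rw [Finset.sum_eq_single (∅ : Finset (Fin n))]
    · simp [hid]
    · intro T _ hT
      have hTu : Finset.univ \ T ≠ Finset.univ := hsdne T hT
      rw [Preadditive.zsmul_comp, hfπ ⟨_, hTu⟩, smul_zero]
    · intro h; exact absurd (Finset.mem_univ _) h
  -- D ≫ π_{1-e} = 0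
  have h2 : D ≫ cokernel.π (𝟙 X - e) = 0 := by
    apply biproduct.hom_ext'
    intro S
    rw [comp_zero, ← Category.assoc]
    have : biproduct.ι _ S ≫ D = f S.1 := by simp [hD]
    rw [this]
    have hfe : f S.1 ≫ (𝟙 X - e) = f S.1 := by
      rw [Preadditive.comp_sub, Category.comp_id, hkill S.1 S.2, sub_zero]
    calc f S.1 ≫ cokernel.π (𝟙 X - e)
        = (f S.1 ≫ (𝟙 X - e)) ≫ cokernel.π (𝟙 X - e) := by rw [hfe]
      _ = 0 := by rw [Category.assoc, cokernel.condition, comp_zero]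
  -- ι_L ≫ f S = 0
  have hιf : ∀ S : {S : Finset (Fin n) // S ≠ Finset.univ},
      kernel.ι L ≫ f S.1 = 0 := by
    intro S
    have : f S.1 = L ≫ biproduct.π (fun _ : {S : Finset (Fin n) // S ≠ Finset.univ} => X) S := by
      simp [hL]
    rw [this, ← Category.assoc, kernel.condition, zero_comp]
  -- ι_L ≫ (1 - e) = 0
  have h3 : kernel.ι L ≫ (𝟙 X - e) = 0 := by
    rw [Preadditive.comp_sub, Category.comp_id, he_def, Preadditive.comp_sum, sub_eq_zero]
    rw [Finset.sum_eq_single (∅ : Finset (Fin n))]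
    · simp [hid]
    · intro T _ hT
      have hTu : Finset.univ \ T ≠ Finset.univ := hsdne T hT
      rw [Preadditive.comp_zsmul, hιf ⟨_, hTu⟩, smul_zero]
    · intro h; exact absurd (Finset.mem_univ _) h
  -- ι_{1-e} ≫ L = 0
  have h4 : kernel.ι (𝟙 X - e) ≫ L = 0 := by
    apply biproduct.hom_ext
    intro S
    rw [zero_comp, Category.assoc]
    have : L ≫ biproduct.π _ S = f S.1 := by simp [hL]
    rw [this]
    have hef : (𝟙 X - e) ≫ f S.1 = f S.1 := by
      rw [Preadditive.sub_comp, Category.id_comp, hkill' S.1 S.2, sub_zero]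
    calc kernel.ι (𝟙 X - e) ≫ f S.1
        = kernel.ι (𝟙 X - e) ≫ ((𝟙 X - e) ≫ f S.1) := by rw [hef]
      _ = 0 := by rw [← Category.assoc, kernel.condition, zero_comp]
  have iso1 : cokernel D ≅ Limits.image e :=
    (cokernelIsoOfKills D (𝟙 X - e) h2 h1).trans (imageIsoCokernelOfIdem e hidem).symm
  have iso2 : Limits.image e ≅ kernel L :=
    (imageIsoKernelOfIdem e hidem).trans (kernelIsoOfKills (𝟙 X - e) L h4 h3)
  exact ⟨⟨iso1⟩, ⟨iso2⟩, ⟨iso1.trans iso2⟩⟩
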